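/- Let X, Y be Banach spaces and T : X → Y bounded, linear, weakly compact with factorization T = T₂ ∘ T₁ through the DFJP space R as above. Then ‖T₂‖ ≤ 2·C + 1, where C is any constant with the closure of T(B_X) contained in C·B_Y; in particular one may take C = ‖T‖. -/
import Mathlib


open Metric Pointwise

/-- Norm bound on the inclusion `T₂ : R → Y` in the DFJP factorization:
`‖T₂‖ ≤ 2C + 1` whenever the closure `K` of `T(B_X)` is contained in `C • B_Y`,
i.e. `‖y‖ ≤ (2C + 1) ‖y‖_R` for every `y` in the diagonal space `R`. -/
theorem dfjp_inclusion_norm_bound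
    {X Y : Type*} [NormedAddCommGroup X] [NormedSpace ℝ X] [CompleteSpace X]
    [NormedAddCommGroup Y] [NormedSpace ℝ Y] [CompleteSpace Y]
    (T : X →L[ℝ] Y)
    (K : Set Y) (hK : K = closure (T '' Metric.closedBall 0 1))
    (hKw : IsCompact (toWeakSpace ℝ Y '' K))
    (C : ℝ) (hC : 0 ≤ C) (hKC : K ⊆ C • Metric.closedBall (0 : Y) 1)
    (Km : ℕ → Set Y)
    (hKm : ∀ m, Km m =
      (2 : ℝ) ^ m • K + (2 : ℝ) ^ (-(m : ℤ)) • Metric.closedBall (0 : Y) 1) :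
    ∀ y : Y, (Summable fun m => (gauge (Km m) y) ^ 2) →
      ‖y‖ ≤ (2 * C + 1) * Real.sqrt (∑' m, (gauge (Km m) y) ^ 2) := by
  intro y hsum
  -- K ⊆ closedBall 0 C
  have hKball : K ⊆ Metric.closedBall (0 : Y) C := by
    intro z hz
    obtain ⟨w, hw, rfl⟩ := hKC hz
    simp only [Metric.mem_closedBall, dist_zero_right] at hw ⊢
    calc ‖C • w‖ = C * ‖w‖ := by rw [norm_smul, Real.norm_of_nonneg hC]
    _ ≤ C * 1 := by nlinarith
    _ = C := mul_one C
  -- Km 0 ⊆ closedBall 0 (C+1)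
  have h0 : Km 0 ⊆ Metric.closedBall (0 : Y) (C + 1) := by
    rw [hKm 0]
    intro z hz
    obtain ⟨a, ha, b, hb, rfl⟩ := hz
    simp only [pow_zero, Nat.cast_zero, neg_zero, zpow_zero, one_smul] at ha hb
    have ha' := hKball ha
    simp only [Metric.mem_closedBall, dist_zero_right] at ha' hb ⊢
    calc ‖a + b‖ ≤ ‖a‖ + ‖b‖ := norm_add_le a b
    _ ≤ C + 1 := add_le_add ha' hb
  -- Km 0 absorbs: it contains the closed unit ball
  have hball : Metric.closedBall (0 : Y) 1 ⊆ Km 0 := by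
    rw [hKm 0]
    intro z hz
    refine ⟨0, ?_, z, ?_, by simp⟩
    · simp only [pow_zero, one_smul]
      rw [hK]
      exact subset_closure ⟨0, by simp, by simp⟩
    · simpa using hz
  have habs : Absorbent ℝ (Km 0) :=
    ((absorbent_ball_zero one_pos).mono (ball_subset_closedBall.trans hball))
  -- gauge comparison
  have hg : ‖y‖ / (C + 1) ≤ gauge (Km 0) y := by
    rw [← gauge_closedBall (by linarith : (0:ℝ) ≤ C + 1) y]
    exact gauge_mono habs h0 y
  have hgnn : 0 ≤ gauge (Km 0) y := gauge_nonneg y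
  -- gauge (Km 0) y ≤ sqrt of sum
  have hle : gauge (Km 0) y ≤ Real.sqrt (∑' m, (gauge (Km m) y) ^ 2) := by
    have h1 : (gauge (Km 0) y) ^ 2 ≤ ∑' m, (gauge (Km m) y) ^ 2 :=
      Summable.le_tsum hsum 0 (fun m _ => sq_nonneg _)
    calc gauge (Km 0) y = Real.sqrt ((gauge (Km 0) y) ^ 2) :=
          (Real.sqrt_sq hgnn).symm
    _ ≤ _ := Real.sqrt_le_sqrt h1
  have hsqrtnn : 0 ≤ Real.sqrt (∑' m, (gauge (Km m) y) ^ 2) := Real.sqrt_nonneg _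
  have : ‖y‖ ≤ (C + 1) * gauge (Km 0) y := by
    rw [div_le_iff₀ (by linarith : (0:ℝ) < C + 1)] at hg
    linarith [hg]
  calc ‖y‖ ≤ (C + 1) * gauge (Km 0) y := this
  _ ≤ (2 * C + 1) * Real.sqrt (∑' m, (gauge (Km m) y) ^ 2) := by nlinarith
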